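/- arXiv:1911.10604 — 4 statements merged into one kernel-verified Lean document; each statement's English description precedes it below -/
import Mathlib

section
/- Absolute-value inequality for quadratic forms (inequality (ineq.2) in the proof of Lemma 6): let M ∈ ℝ^{n×p} satisfy Σ_{j=1}^p M_{ij} M_{kj} ≥ 0 for all pairs i ≠ k. Then for every x ∈ ℝ^n, Σ_{j=1}^p (Σ_{i=1}^n x_i M_{ij})² ≤ Σ_{j=1}^p (Σ_{i=1}^n |x_i| M_{ij})², i.e. ‖M^T x‖₂ ≤ ‖M^T |x|‖₂ where |x| is the entrywise absolute value of x. -/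
/-- if the rows of `M ∈ ℝ^{n×p}` have pairwise nonnegative inner products,
then for every `x ∈ ℝⁿ`, `Σ_j (Σ_i x_i M_{ij})² ≤ Σ_j (Σ_i |x_i| M_{ij})²`,
i.e. `‖Mᵀx‖₂ ≤ ‖Mᵀ|x|‖₂`. -/
theorem sq_proj_le_sq_proj_abs {n p : ℕ} (M : Matrix (Fin n) (Fin p) ℝ)
    (h : ∀ i k, i ≠ k → 0 ≤ ∑ j, M i j * M k j) (x : Fin n → ℝ) :
    ∑ j, (∑ i, x i * M i j) ^ 2 ≤ ∑ j, (∑ i, |x i| * M i j) ^ 2 := by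
  have key : ∀ y : Fin n → ℝ,
      ∑ j, (∑ i, y i * M i j) ^ 2
        = ∑ i, ∑ k, y i * y k * ∑ j, M i j * M k j := by
    intro y
    have : ∀ j : Fin p, (∑ i, y i * M i j) ^ 2
        = ∑ i, ∑ k, y i * y k * (M i j * M k j) := by
      intro j
      rw [sq, Finset.sum_mul_sum]
      apply Finset.sum_congr rfl; intro i _
      apply Finset.sum_congr rfl; intro k _
      ring
    rw [Finset.sum_congr rfl fun j _ => this j, Finset.sum_comm]
    apply Finset.sum_congr rfl; intro i _
    rw [Finset.sum_comm]
    apply Finset.sum_congr rfl; intro k _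
    rw [Finset.mul_sum]
  rw [key x, key fun i => |x i|]
  apply Finset.sum_le_sum; intro i _
  apply Finset.sum_le_sum; intro k _
  rcases eq_or_ne i k with rfl | hik
  · simp [← abs_mul, abs_mul_self]
  · have h1 := h i k hik
    have h2 : x i * x k ≤ |x i| * |x k| := by
      rw [← abs_mul]; exact le_abs_self _
    exact mul_le_mul_of_nonneg_right h2 h1
end

section
/- Nonnegative first left singular vector (Lemma 6, reformulated): let Θ ∈ ℝ^{n×p} have nondecreasing rows and let Θ' = Θ(I − p⁻¹ee^T) be the row-centered matrix. Then sup{‖Θ'^T x‖₂ : x ∈ ℝ^n, ‖x‖₂ = 1} = sup{‖Θ'^T x‖₂ : x ∈ ℝ^n, ‖x‖₂ = 1, x_i ≥ 0 for all i}; in particular there exists a unit vector u ∈ ℝ^n with nonnegative entries attaining the maximum of x ↦ ‖Θ'^T x‖₂ over the unit sphere. -/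
/-- The row-centered matrix `Θ' = Θ(I − p⁻¹eeᵀ)`, i.e. `θ'_{ij} = θ_{ij} − p⁻¹ Σ_l θ_{il}`. -/
noncomputable def rowCenter {n p : ℕ} (Θ : Fin n → Fin p → ℝ) : Fin n → Fin p → ℝ :=
  fun i j => Θ i j - (∑ l, Θ i l) / (p : ℝ)

/-- Gram entries of the centered matrix are nonnegative (Chebyshev). -/
lemma gram_nonneg {n p : ℕ} (hp : 0 < p) (Θ : Fin n → Fin p → ℝ)
    (hrows : ∀ i, Monotone (Θ i)) (i k : Fin n) :
    0 ≤ ∑ j, rowCenter Θ i j * rowCenter Θ k j := by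
  have hmono : Monovary (Θ i) (Θ k) := by
    intro a b hab
    rcases le_total a b with h | h
    · exact hrows i h
    · exact absurd (hrows k h) hab.not_ge
  have cheb := hmono.sum_mul_sum_le_card_mul_sum
  rw [Fintype.card_fin] at cheb
  have hp' : (0:ℝ) < (p:ℝ) := by exact_mod_cast hp
  have expand : ∑ j, rowCenter Θ i j * rowCenter Θ k j
      = (∑ j, Θ i j * Θ k j) - (∑ j, Θ i j) * (∑ j, Θ k j) / p := by
    unfold rowCenter
    have h1 : ∀ j : Fin p, (Θ i j - (∑ l, Θ i l) / p) * (Θ k j - (∑ l, Θ k l) / p)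
        = Θ i j * Θ k j - ((∑ l, Θ i l) / p) * Θ k j - ((∑ l, Θ k l) / p) * Θ i j
          + ((∑ l, Θ i l) / p) * ((∑ l, Θ k l) / p) := fun j => by ring
    simp_rw [h1, Finset.sum_add_distrib, Finset.sum_sub_distrib, ← Finset.mul_sum,
      Finset.sum_const, Finset.card_fin, nsmul_eq_mul]
    field_simp
    ring
  rw [expand, sub_nonneg, div_le_iff₀ hp']
  linarith [cheb]

/-- Quadratic form expansion. -/
lemma qform {n p : ℕ} (C : Fin n → Fin p → ℝ) (x : Fin n → ℝ) :
    ∑ j, (∑ i, x i * C i j) ^ 2 = ∑ i, ∑ k, (x i * x k) * (∑ j, C i j * C k j) := by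
  have h1 : ∀ j : Fin p, (∑ i, x i * C i j) ^ 2 = ∑ i, ∑ k, (x i * x k) * (C i j * C k j) := by
    intro j
    rw [sq, Finset.sum_mul_sum]
    exact Finset.sum_congr rfl fun i _ => Finset.sum_congr rfl fun k _ => by ring
  calc ∑ j, (∑ i, x i * C i j) ^ 2
      = ∑ j, ∑ i, ∑ k, (x i * x k) * (C i j * C k j) := by simp_rw [h1]
    _ = ∑ i, ∑ j, ∑ k, (x i * x k) * (C i j * C k j) := Finset.sum_comm
    _ = ∑ i, ∑ k, ∑ j, (x i * x k) * (C i j * C k j) :=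
        Finset.sum_congr rfl fun i _ => Finset.sum_comm
    _ = ∑ i, ∑ k, (x i * x k) * (∑ j, C i j * C k j) := by simp_rw [← Finset.mul_sum]

/-- Replacing `x` by `|x|` does not decrease the quadratic form. -/
lemma qabs {n p : ℕ} (hp : 0 < p) (Θ : Fin n → Fin p → ℝ)
    (hrows : ∀ i, Monotone (Θ i)) (x : Fin n → ℝ) :
    ∑ j, (∑ i, x i * rowCenter Θ i j) ^ 2 ≤ ∑ j, (∑ i, |x i| * rowCenter Θ i j) ^ 2 := by
  rw [qform, qform]
  refine Finset.sum_le_sum fun i _ => Finset.sum_le_sum fun k _ => ?_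
  refine mul_le_mul_of_nonneg_right ?_ (gram_nonneg hp Θ hrows i k)
  rw [← abs_mul]
  exact le_abs_self _

/-- Lemma 6, reformulated: for `Θ` with nondecreasing rows and its
row-centered version `Θ'`, the supremum of `x ↦ ‖Θ'ᵀx‖₂` over the unit sphere equals
the supremum over nonnegative unit vectors; in particular some nonnegative unit vector
attains the maximum (a first left singular vector of `Θ'` can be chosen nonnegative). -/
theorem exists_nonneg_first_left_singular_vector {n p : ℕ} (hn : 0 < n) (hp : 0 < p)
    (Θ : Fin n → Fin p → ℝ) (hrows : ∀ i, Monotone (Θ i)) :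
    (sSup {r : ℝ | ∃ x : Fin n → ℝ, ∑ i, x i ^ 2 = 1 ∧
        r = Real.sqrt (∑ j, (∑ i, x i * rowCenter Θ i j) ^ 2)} =
      sSup {r : ℝ | ∃ x : Fin n → ℝ, (∑ i, x i ^ 2 = 1) ∧ (∀ i, 0 ≤ x i) ∧
        r = Real.sqrt (∑ j, (∑ i, x i * rowCenter Θ i j) ^ 2)}) ∧
    ∃ u : Fin n → ℝ, (∑ i, u i ^ 2 = 1) ∧ (∀ i, 0 ≤ u i) ∧
      ∀ x : Fin n → ℝ, ∑ i, x i ^ 2 = 1 →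
        Real.sqrt (∑ j, (∑ i, x i * rowCenter Θ i j) ^ 2) ≤
          Real.sqrt (∑ j, (∑ i, u i * rowCenter Θ i j) ^ 2) := by
  classical
  set C := rowCenter Θ with hC
  have hQcont : Continuous (fun x : Fin n → ℝ => ∑ j, (∑ i, x i * C i j) ^ 2) :=
    continuous_finset_sum _ fun j _ =>
      (continuous_finset_sum _ fun i _ => (continuous_apply i).mul continuous_const).pow 2
  set S : Set (Fin n → ℝ) := {x | ∑ i, x i ^ 2 = 1} with hS
  have hSne : S.Nonempty := by
    refine ⟨fun i => if i = ⟨0, hn⟩ then 1 else 0, ?_⟩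
    simp [hS, Finset.sum_ite_eq', sq]
  have hScompact : IsCompact S := by
    have hclosed : IsClosed S := by
      have : S = (fun x : Fin n → ℝ => ∑ i, x i ^ 2) ⁻¹' {1} := rfl
      rw [this]
      refine IsClosed.preimage ?_ isClosed_singleton
      exact continuous_finset_sum _ fun i _ => (continuous_apply i).pow 2
    have hbdd : S ⊆ Metric.closedBall 0 1 := by
      intro x hx
      rw [Metric.mem_closedBall, dist_zero_right]
      rw [pi_norm_le_iff_of_nonneg zero_le_one]
      intro i
      have h1 : x i ^ 2 ≤ 1 := by
        rw [← hx]
        exact Finset.single_le_sum (fun k _ => sq_nonneg (x k)) (Finset.mem_univ i)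
      rw [Real.norm_eq_abs]
      nlinarith [abs_nonneg (x i), sq_abs (x i)]
    exact (isCompact_closedBall (0 : Fin n → ℝ) 1).of_isClosed_subset hclosed hbdd
  obtain ⟨v, hvS, hvmax⟩ := hScompact.exists_isMaxOn hSne hQcont.continuousOn
  set u : Fin n → ℝ := fun i => |v i| with hu
  have huS : u ∈ S := by
    simp only [hS, Set.mem_setOf_eq, hu, sq_abs]
    exact hvS
  have hunn : ∀ i, 0 ≤ u i := fun i => abs_nonneg _
  have humax' : ∀ x : Fin n → ℝ, ∑ i, x i ^ 2 = 1 →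
      Real.sqrt (∑ j, (∑ i, x i * C i j) ^ 2) ≤ Real.sqrt (∑ j, (∑ i, u i * C i j) ^ 2) := by
    intro x hx
    refine Real.sqrt_le_sqrt (le_trans (hvmax hx) ?_)
    exact qabs hp Θ hrows v
  constructor
  · set r₀ := Real.sqrt (∑ j, (∑ i, u i * C i j) ^ 2) with hr₀
    have hS1 : sSup {r : ℝ | ∃ x : Fin n → ℝ, ∑ i, x i ^ 2 = 1 ∧
        r = Real.sqrt (∑ j, (∑ i, x i * C i j) ^ 2)} = r₀ := by
      have hmem : r₀ ∈ {r : ℝ | ∃ x : Fin n → ℝ, ∑ i, x i ^ 2 = 1 ∧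
          r = Real.sqrt (∑ j, (∑ i, x i * C i j) ^ 2)} := ⟨u, huS, rfl⟩
      have hub : ∀ r ∈ {r : ℝ | ∃ x : Fin n → ℝ, ∑ i, x i ^ 2 = 1 ∧
          r = Real.sqrt (∑ j, (∑ i, x i * C i j) ^ 2)}, r ≤ r₀ := by
        rintro r ⟨x, hx, rfl⟩
        exact humax' x hx
      exact le_antisymm (csSup_le ⟨r₀, hmem⟩ hub) (le_csSup ⟨r₀, hub⟩ hmem)
    have hS2 : sSup {r : ℝ | ∃ x : Fin n → ℝ, (∑ i, x i ^ 2 = 1) ∧ (∀ i, 0 ≤ x i) ∧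
        r = Real.sqrt (∑ j, (∑ i, x i * C i j) ^ 2)} = r₀ := by
      have hmem : r₀ ∈ {r : ℝ | ∃ x : Fin n → ℝ, (∑ i, x i ^ 2 = 1) ∧ (∀ i, 0 ≤ x i) ∧
          r = Real.sqrt (∑ j, (∑ i, x i * C i j) ^ 2)} := ⟨u, huS, hunn, rfl⟩
      have hub : ∀ r ∈ {r : ℝ | ∃ x : Fin n → ℝ, (∑ i, x i ^ 2 = 1) ∧ (∀ i, 0 ≤ x i) ∧
          r = Real.sqrt (∑ j, (∑ i, x i * C i j) ^ 2)}, r ≤ r₀ := by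
        rintro r ⟨x, hx, _, rfl⟩
        exact humax' x hx
      exact le_antisymm (csSup_le ⟨r₀, hmem⟩ hub) (le_csSup ⟨r₀, hub⟩ hmem)
    rw [hS1, hS2]
  · exact ⟨u, huS, hunn, humax'⟩
end

section
/- Monotone first right singular vector (Proposition 3, reformulated): let Θ ∈ ℝ^{n×p} have nondecreasing rows and let Θ' = Θ(I − p⁻¹ee^T) be the row-centered matrix, with Θ' ≠ 0. Then there exists a unit vector v ∈ ℝ^p with nondecreasing entries (v_1 ≤ v_2 ≤ … ≤ v_p) such that ‖Θ' v‖₂ = sup{‖Θ' u‖₂ : u ∈ ℝ^p, ‖u‖₂ = 1}; i.e., a first right singular vector of Θ' can be chosen monotone. -/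
namespace MonoSVAux

variable {n p : ℕ}

noncomputable def dotp {p : ℕ} (x y : Fin p → ℝ) : ℝ := ∑ j, x j * y j

noncomputable def qf (A : Fin n → Fin p → ℝ) (u : Fin p → ℝ) : ℝ :=
  ∑ i, (dotp (A i) u) ^ 2

noncomputable def Mop (A : Fin n → Fin p → ℝ) (u : Fin p → ℝ) : Fin p → ℝ :=
  fun j => ∑ i, dotp (A i) u * A i j

lemma dotp_comm (x y : Fin p → ℝ) : dotp x y = dotp y x := by
  simp [dotp, mul_comm]

lemma dotp_Mop (A : Fin n → Fin p → ℝ) (u y : Fin p → ℝ) :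
    dotp (Mop A u) y = ∑ i, dotp (A i) u * dotp (A i) y := by
  simp only [dotp, Mop, Finset.sum_mul, Finset.mul_sum]
  rw [Finset.sum_comm]
  exact Finset.sum_congr rfl fun i _ => Finset.sum_congr rfl fun j _ =>
    Finset.sum_congr rfl fun x _ => by ring

lemma dotp_single (x : Fin p → ℝ) (j : Fin p) : dotp x (Pi.single j 1) = x j := by
  rw [dotp, Finset.sum_eq_single j]
  · simp
  · intro k _ hk; simp [Pi.single_apply, hk]
  · simp

lemma dotp_smul (a u : Fin p → ℝ) (c : ℝ) :
    dotp a (fun j => c * u j) = c * dotp a u := by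
  rw [dotp, dotp, Finset.mul_sum]
  exact Finset.sum_congr rfl fun j _ => by ring

lemma dotp_add_smul (a w u : Fin p → ℝ) (t : ℝ) :
    dotp a (fun j => w j + t * u j) = dotp a w + t * dotp a u := by
  rw [dotp, dotp, dotp, Finset.mul_sum, ← Finset.sum_add_distrib]
  exact Finset.sum_congr rfl fun j _ => by ring

lemma qf_nonneg (A : Fin n → Fin p → ℝ) (u : Fin p → ℝ) : 0 ≤ qf A u :=
  Finset.sum_nonneg fun i _ => sq_nonneg _

lemma qf_smul (A : Fin n → Fin p → ℝ) (u : Fin p → ℝ) (c : ℝ) :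
    qf A (fun j => c * u j) = c ^ 2 * qf A u := by
  rw [qf, qf, Finset.mul_sum]
  exact Finset.sum_congr rfl fun i _ => by rw [dotp_smul]; ring

lemma qf_expand (A : Fin n → Fin p → ℝ) (w u : Fin p → ℝ) (t : ℝ) :
    qf A (fun j => w j + t * u j)
      = qf A w + 2 * t * dotp (Mop A w) u + t ^ 2 * qf A u := by
  rw [qf, qf, qf, dotp_Mop]
  rw [Finset.mul_sum, Finset.mul_sum, ← Finset.sum_add_distrib, ← Finset.sum_add_distrib]
  exact Finset.sum_congr rfl fun i _ => by rw [dotp_add_smul]; ring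

lemma sq_sum_expand (w u : Fin p → ℝ) (t : ℝ) :
    ∑ j, (w j + t * u j) ^ 2
      = (∑ j, w j ^ 2) + 2 * t * dotp w u + t ^ 2 * ∑ j, u j ^ 2 := by
  rw [dotp, Finset.mul_sum, Finset.mul_sum, ← Finset.sum_add_distrib, ← Finset.sum_add_distrib]
  exact Finset.sum_congr rfl fun j _ => by ring

lemma continuous_qf (A : Fin n → Fin p → ℝ) : Continuous (qf A) := by
  apply continuous_finset_sum
  intro i _
  exact (continuous_finset_sum _ fun j _ => continuous_const.mul (continuous_apply j)).pow 2


lemma dotp_neg (a y : Fin p → ℝ) : dotp a (fun j => - y j) = - dotp a y := by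
  rw [dotp, dotp, ← Finset.sum_neg_distrib]
  exact Finset.sum_congr rfl fun j _ => by ring

lemma qf_le_of_unit_bound (A : Fin n → Fin p → ℝ) {b : ℝ} (u : Fin p → ℝ)
    (h : ∀ c : ℝ, 0 < c → (∑ j, (c * u j) ^ 2 = 1) → qf A (fun j => c * u j) ≤ b) :
    qf A u ≤ b * ∑ j, u j ^ 2 := by
  rcases eq_or_lt_of_le (Finset.sum_nonneg (fun j _ => sq_nonneg (u j)) :
      (0:ℝ) ≤ ∑ j, u j ^ 2) with h0 | h0
  · have hz : ∀ j, u j = 0 := fun j =>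
      pow_eq_zero_iff (two_ne_zero) |>.1
        ((Finset.sum_eq_zero_iff_of_nonneg fun j _ => sq_nonneg (u j)).1 h0.symm j
          (Finset.mem_univ j))
    have hq : qf A u = 0 := by
      refine Finset.sum_eq_zero fun i _ => ?_
      have hd : dotp (A i) u = 0 := by simp [dotp, hz]
      rw [hd]; ring
    rw [hq, ← h0, mul_zero]
  · set s := Real.sqrt (∑ j, u j ^ 2) with hs
    have hspos : 0 < s := Real.sqrt_pos.2 h0
    have hs2 : s ^ 2 = ∑ j, u j ^ 2 := Real.sq_sqrt h0.le
    have hcpos : 0 < s⁻¹ := inv_pos.2 hspos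
    have hunit : ∑ j, (s⁻¹ * u j) ^ 2 = 1 := by
      have he : ∑ j, (s⁻¹ * u j) ^ 2 = s⁻¹ ^ 2 * ∑ j, u j ^ 2 := by
        rw [Finset.mul_sum]; exact Finset.sum_congr rfl fun j _ => by ring
      rw [he, ← hs2]
      field_simp
    have h1 := h s⁻¹ hcpos hunit
    rw [qf_smul] at h1
    have h2 := mul_le_mul_of_nonneg_left h1 (sq_nonneg s)
    calc qf A u = s ^ 2 * (s⁻¹ ^ 2 * qf A u) := by field_simp
      _ ≤ s ^ 2 * b := h2
      _ = b * ∑ j, u j ^ 2 := by rw [hs2]; ring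

end MonoSVAux

set_option maxHeartbeats 1000000 in
open MonoSVAux in
/-- Proposition 3, reformulated: if `Θ` has nondecreasing rows and its
row-centered version `Θ'` is nonzero, then a first right singular vector of `Θ'` can be
chosen monotone: there is a unit vector `v` with nondecreasing entries maximizing
`u ↦ ‖Θ'u‖₂` over the unit sphere of `ℝ^p`. -/
theorem exists_monotone_first_right_singular_vector {n p : ℕ} (hp : 0 < p)
    (Θ : Fin n → Fin p → ℝ) (hrows : ∀ i, Monotone (Θ i))
    (hne : rowCenter Θ ≠ 0) :
    ∃ v : Fin p → ℝ, (∑ j, v j ^ 2 = 1) ∧ Monotone v ∧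
      ∀ u : Fin p → ℝ, ∑ j, u j ^ 2 = 1 →
        Real.sqrt (∑ i, (∑ j, rowCenter Θ i j * u j) ^ 2) ≤
          Real.sqrt (∑ i, (∑ j, rowCenter Θ i j * v j) ^ 2) := by
  classical
  set A := rowCenter Θ with hA
  have hpR : (0:ℝ) < p := by exact_mod_cast hp
  have hAmono : ∀ i, Monotone (A i) := by
    intro i j k hjk
    exact sub_le_sub_right (hrows i hjk) _
  have hAsum : ∀ i, ∑ j, A i j = 0 := by
    intro i
    simp only [hA, rowCenter]
    rw [Finset.sum_sub_distrib, Finset.sum_const, Finset.card_univ, Fintype.card_fin]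
    rw [nsmul_eq_mul, mul_div_assoc', mul_div_cancel_left₀ _ hpR.ne', sub_self]
  have cheb : ∀ i (u : Fin p → ℝ), Monotone u → 0 ≤ dotp (A i) u := by
    intro i u hu
    have h := ((hAmono i).monovary hu).sum_mul_sum_le_card_mul_sum
    rw [hAsum i, zero_mul, Fintype.card_fin] at h
    have h2 : (0:ℝ) ≤ (p:ℝ) * dotp (A i) u := by
      rw [dotp]; exact_mod_cast h
    nlinarith
  -- sets
  have hSclosed : IsClosed {u : Fin p → ℝ | ∑ j, u j ^ 2 = 1} := by
    have hc : Continuous fun u : Fin p → ℝ => ∑ j, u j ^ 2 :=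
      continuous_finset_sum _ fun j _ => (continuous_apply j).pow 2
    exact isClosed_eq hc continuous_const
  have habs : ∀ u : Fin p → ℝ, (∑ j, u j ^ 2 = 1) → ∀ j, |u j| ≤ 1 := by
    intro u hu j
    have h1 : u j ^ 2 ≤ 1 := by
      rw [← hu]
      exact Finset.single_le_sum (fun k _ => sq_nonneg (u k)) (Finset.mem_univ j)
    rw [abs_le]; constructor <;> nlinarith
  have hSsub : {u : Fin p → ℝ | ∑ j, u j ^ 2 = 1} ⊆ Metric.closedBall 0 1 := by
    intro u hu
    rw [Metric.mem_closedBall, dist_zero_right]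
    refine (pi_norm_le_iff_of_nonneg zero_le_one).2 fun j => ?_
    simpa [Real.norm_eq_abs] using habs u hu j
  have hScompact : IsCompact {u : Fin p → ℝ | ∑ j, u j ^ 2 = 1} :=
    (isCompact_closedBall 0 1).of_isClosed_subset hSclosed hSsub
  have hconst : (fun _ : Fin p => (Real.sqrt p)⁻¹) ∈ {u : Fin p → ℝ | ∑ j, u j ^ 2 = 1} := by
    have hsq : Real.sqrt p ^ 2 = p := Real.sq_sqrt hpR.le
    simp only [Set.mem_setOf_eq, Finset.sum_const, Finset.card_univ, Fintype.card_fin, nsmul_eq_mul]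
    rw [inv_pow, hsq]
    field_simp
  have hSne : {u : Fin p → ℝ | ∑ j, u j ^ 2 = 1}.Nonempty := ⟨_, hconst⟩
  have hCclosed : IsClosed {u : Fin p → ℝ | Monotone u} := by
    have he : {u : Fin p → ℝ | Monotone u}
        = ⋂ (q : Fin p × Fin p), {u : Fin p → ℝ | q.1 ≤ q.2 → u q.1 ≤ u q.2} := by
      ext u
      constructor
      · intro hu; simp only [Set.mem_iInter]; exact fun q h => hu h
      · intro hu j k hjk; exact (Set.mem_iInter.1 hu (j, k)) hjk
    rw [he]
    refine isClosed_iInter fun q => ?_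
    by_cases hq : q.1 ≤ q.2
    · simp only [hq, forall_true_left]
      exact isClosed_le (continuous_apply q.1) (continuous_apply q.2)
    · simp [hq]
  have hKcompact : IsCompact ({u : Fin p → ℝ | ∑ j, u j ^ 2 = 1} ∩ {u | Monotone u}) :=
    hScompact.inter_right hCclosed
  have hKne : ({u : Fin p → ℝ | ∑ j, u j ^ 2 = 1} ∩ {u | Monotone u}).Nonempty :=
    ⟨_, hconst, monotone_const⟩
  obtain ⟨w, hwS, hwmax⟩ := hScompact.exists_isMaxOn hSne (continuous_qf A).continuousOn
  obtain ⟨v, hvK, hvmax⟩ := hKcompact.exists_isMaxOn hKne (continuous_qf A).continuousOn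
  have hwun : ∑ j, w j ^ 2 = 1 := hwS
  set lam := qf A w with hlam
  set mu := qf A v with hmu
  have lam_nonneg : 0 ≤ lam := qf_nonneg A w
  have mu_nonneg : 0 ≤ mu := qf_nonneg A v
  have lam_bound : ∀ u : Fin p → ℝ, qf A u ≤ lam * ∑ j, u j ^ 2 := by
    intro u
    refine qf_le_of_unit_bound A u fun c hc hcu => ?_
    exact hwmax hcu
  have mu_bound : ∀ u : Fin p → ℝ, Monotone u → qf A u ≤ mu * ∑ j, u j ^ 2 := by
    intro u hu
    refine qf_le_of_unit_bound A u fun c hc hcu => ?_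
    refine hvmax ⟨hcu, ?_⟩
    intro j k hjk
    exact mul_le_mul_of_nonneg_left (hu hjk) hc.le
  -- w is an eigenvector of Mop A with eigenvalue lam
  have hweig : ∀ jj : Fin p, Mop A w jj = lam * w jj := by
    have key : ∀ u : Fin p → ℝ, dotp (Mop A w) u = lam * dotp w u := by
      intro u
      set D := dotp (Mop A w) u - lam * dotp w u with hD
      set B := lam * (∑ j, u j ^ 2) - qf A u with hB
      have hBnn : 0 ≤ B := by rw [hB]; linarith [lam_bound u]
      have key2 : ∀ t : ℝ, 2 * t * D ≤ t ^ 2 * B := by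
        intro t
        have h1 := lam_bound (fun j => w j + t * u j)
        rw [qf_expand, sq_sum_expand, hwun, ← hlam] at h1
        rw [hD, hB]
        nlinarith [h1]
      have h1 := key2 (D / (B + 1))
      have hB1 : (0:ℝ) < B + 1 := by linarith
      set s := D / (B + 1) with hsdef
      have hDe : D = s * (B + 1) := by
        rw [hsdef]; field_simp
      rw [hDe] at h1
      have hsq : s ^ 2 ≤ 0 := by nlinarith [h1, hBnn, sq_nonneg s, mul_nonneg (sq_nonneg s) hBnn]
      have hs0 : s = 0 := by
        have h2 : s ^ 2 = 0 := le_antisymm hsq (sq_nonneg s)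
        exact pow_eq_zero_iff two_ne_zero |>.1 h2
      have hD0 : D = 0 := by rw [hDe, hs0, zero_mul]
      rw [hD] at hD0
      linarith
    intro jj
    have h := key (Pi.single jj 1)
    rwa [dotp_single, dotp_single] at h
  -- positivity of lam
  have hlampos : 0 < lam := by
    have hAne : ∃ i j, A i j ≠ 0 := by
      by_contra hcon
      push_neg at hcon
      exact hne (funext fun i => funext fun j => hcon i j)
    obtain ⟨i0, j0, hij⟩ := hAne
    have hmem : (Pi.single j0 (1:ℝ) : Fin p → ℝ) ∈ {u : Fin p → ℝ | ∑ j, u j ^ 2 = 1} := by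
      simp only [Set.mem_setOf_eq]
      rw [Finset.sum_eq_single j0]
      · simp
      · intro k _ hk; simp [Pi.single_apply, hk]
      · simp
    have h1 : qf A (Pi.single j0 1) ≤ lam := by
      have := hwmax hmem; rwa [← hlam] at this
    have h2 : 0 < qf A (Pi.single j0 1) := by
      rw [qf]
      refine Finset.sum_pos' (fun i _ => sq_nonneg _) ⟨i0, Finset.mem_univ i0, ?_⟩
      rw [dotp_single]
      positivity
    linarith
  -- Mop preserves the monotone cone
  have hMopmono : ∀ u : Fin p → ℝ, Monotone u → Monotone (Mop A u) := by
    intro u hu j k hjk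
    exact Finset.sum_le_sum fun i _ => mul_le_mul_of_nonneg_left (hAmono i hjk) (cheb i u hu)
  -- key contraction bound on the monotone cone
  have hMopbound : ∀ u : Fin p → ℝ, Monotone u →
      ∑ j, (Mop A u j) ^ 2 ≤ lam * mu * ∑ j, u j ^ 2 := by
    intro u hu
    set N := ∑ j, (Mop A u j) ^ 2 with hN
    have hNnn : 0 ≤ N := Finset.sum_nonneg fun j _ => sq_nonneg _
    have hNd : N = dotp (Mop A u) (Mop A u) := by
      rw [hN, dotp]
      exact Finset.sum_congr rfl fun j _ => sq (Mop A u j) ▸ by ring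
    have hcs : N ^ 2 ≤ qf A u * qf A (Mop A u) := by
      rw [hNd, dotp_Mop]
      exact Finset.sum_mul_sq_le_sq_mul_sq _ _ _
    have h2 : qf A (Mop A u) ≤ lam * N := by
      rw [hN]; exact lam_bound (Mop A u)
    have h3 : qf A u ≤ mu * ∑ j, u j ^ 2 := mu_bound u hu
    have hSnn : 0 ≤ ∑ j, u j ^ 2 := Finset.sum_nonneg fun j _ => sq_nonneg _
    rcases hNnn.eq_or_lt with h0 | h0
    · rw [← h0]; positivity
    · have h4 : N ^ 2 ≤ (mu * ∑ j, u j ^ 2) * (lam * N) := by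
        calc N ^ 2 ≤ qf A u * qf A (Mop A u) := hcs
          _ ≤ (mu * ∑ j, u j ^ 2) * (lam * N) := by
            apply mul_le_mul h3 h2 (qf_nonneg _ _) (by positivity)
      nlinarith [h4, h0]
  -- decomposition of w and sign choice
  have hwabs : ∀ j, |w j| ≤ 1 := habs w hwS
  have hc2mono : Monotone (fun j : Fin p => 3 * (j : ℝ)) := by
    intro j k hjk
    have h : (j : ℝ) ≤ (k : ℝ) := by exact_mod_cast (Fin.le_def.1 hjk)
    show (3:ℝ) * (j : ℝ) ≤ 3 * (k : ℝ)
    linarith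
  have hc1mono : Monotone (fun j : Fin p => w j + 3 * (j : ℝ)) := by
    intro j k hjk
    rcases eq_or_lt_of_le hjk with heq | hlt
    · rw [heq]
    · have h1 : (j : ℕ) < (k : ℕ) := hlt
      have h2 : (j : ℝ) + 1 ≤ (k : ℝ) := by exact_mod_cast Nat.succ_le_of_lt h1
      have h3 := abs_le.1 (hwabs j)
      have h4 := abs_le.1 (hwabs k)
      simp only
      linarith
  have hdec : dotp (fun j : Fin p => w j + 3 * (j : ℝ)) w
      = dotp w w + dotp (fun j : Fin p => 3 * (j : ℝ)) w := by
    rw [dotp, dotp, dotp, ← Finset.sum_add_distrib]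
    exact Finset.sum_congr rfl fun j _ => by ring
  have hww : dotp w w = 1 := by
    rw [dotp, ← hwun]
    exact Finset.sum_congr rfl fun j _ => by ring
  obtain ⟨c, w', hcmono, hw'eig, hw'un, hcw'⟩ :
      ∃ c w' : Fin p → ℝ, Monotone c ∧ (∀ j, Mop A w' j = lam * w' j) ∧
        (∑ j, w' j ^ 2 = 1) ∧ 0 < dotp c w' := by
    rcases lt_or_ge 0 (dotp (fun j : Fin p => w j + 3 * (j : ℝ)) w) with hpos | hneg
    · exact ⟨_, w, hc1mono, hweig, hwun, hpos⟩
    · refine ⟨_, fun j => - w j, hc2mono, ?_, ?_, ?_⟩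
      · intro j
        have hm : Mop A (fun j => - w j) j = - Mop A w j := by
          rw [Mop, Mop, ← Finset.sum_neg_distrib]
          exact Finset.sum_congr rfl fun i _ => by rw [dotp_neg]; ring
        rw [hm, hweig]
        ring
      · calc ∑ j, (- w j) ^ 2 = ∑ j, w j ^ 2 := Finset.sum_congr rfl fun j _ => by ring
          _ = 1 := hwun
      · have h5 : dotp (fun j : Fin p => 3 * (j : ℝ)) (fun j => - w j)
            = - dotp (fun j : Fin p => 3 * (j : ℝ)) w := by
          rw [dotp_neg]
        rw [h5]
        have : dotp (fun j : Fin p => 3 * (j : ℝ)) w ≤ -1 := by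
          have := hdec
          linarith [hww, hneg]
        linarith
  -- power iteration
  have main : ∀ k : ℕ, Monotone ((Mop A)^[k] c) ∧
      dotp ((Mop A)^[k] c) w' = lam ^ k * dotp c w' ∧
      ∑ j, ((Mop A)^[k] c j) ^ 2 ≤ (lam * mu) ^ k * ∑ j, c j ^ 2 := by
    intro k
    induction k with
    | zero => simpa using hcmono
    | succ k ih =>
      obtain ⟨ihm, ihd, ihn⟩ := ih
      rw [Function.iterate_succ_apply']
      refine ⟨hMopmono _ ihm, ?_, ?_⟩
      · have hsym : dotp (Mop A ((Mop A)^[k] c)) w' = lam * dotp ((Mop A)^[k] c) w' := by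
          rw [dotp_Mop]
          have h6 : ∑ i, dotp (A i) ((Mop A)^[k] c) * dotp (A i) w'
              = dotp (Mop A w') ((Mop A)^[k] c) := by
            rw [dotp_Mop]
            exact Finset.sum_congr rfl fun i _ => by ring
          rw [h6]
          have h7 : dotp (Mop A w') ((Mop A)^[k] c)
              = ∑ j, (lam * w' j) * ((Mop A)^[k] c) j := by
            rw [dotp]
            exact Finset.sum_congr rfl fun j _ => by rw [hw'eig]
          rw [h7, dotp, Finset.mul_sum]
          exact Finset.sum_congr rfl fun j _ => by ring
        rw [hsym, ihd]
        ring
      · calc ∑ j, (Mop A ((Mop A)^[k] c) j) ^ 2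
            ≤ lam * mu * ∑ j, ((Mop A)^[k] c j) ^ 2 := hMopbound _ ihm
          _ ≤ lam * mu * ((lam * mu) ^ k * ∑ j, c j ^ 2) := by
              refine mul_le_mul_of_nonneg_left ihn ?_
              positivity
          _ = (lam * mu) ^ (k + 1) * ∑ j, c j ^ 2 := by ring
  -- conclusion : lam ≤ mu
  have hlammu : lam ≤ mu := by
    by_contra hlt
    push_neg at hlt
    have hr0 : 0 ≤ mu / lam := div_nonneg mu_nonneg lam_nonneg
    have hr1 : mu / lam < 1 := (div_lt_one hlampos).2 hlt
    have hkey : ∀ k : ℕ, dotp c w' ^ 2 ≤ (mu / lam) ^ k * ∑ j, c j ^ 2 := by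
      intro k
      obtain ⟨_, hd, hn⟩ := main k
      have hcs : dotp ((Mop A)^[k] c) w' ^ 2
          ≤ (∑ j, ((Mop A)^[k] c j) ^ 2) * ∑ j, w' j ^ 2 := by
        rw [dotp]
        exact Finset.sum_mul_sq_le_sq_mul_sq _ _ _
      rw [hd, hw'un, mul_one] at hcs
      have h2 : (lam ^ k) ^ 2 * dotp c w' ^ 2 ≤ (lam * mu) ^ k * ∑ j, c j ^ 2 := by
        calc (lam ^ k) ^ 2 * dotp c w' ^ 2 = (lam ^ k * dotp c w') ^ 2 := by ring
          _ ≤ _ := le_trans hcs hn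
      have hfac : (lam * mu) ^ k = (lam ^ k) ^ 2 * (mu / lam) ^ k := by
        have hlne : lam ≠ 0 := ne_of_gt hlampos
        rw [mul_pow, div_pow, sq, mul_assoc, mul_div_assoc', mul_div_cancel_left₀ _ (pow_ne_zero k hlne)]
      rw [hfac] at h2
      have hlk : 0 < (lam ^ k) ^ 2 := by positivity
      have := (mul_le_mul_iff_right₀ hlk).1 (by linarith [h2] :
        (lam ^ k) ^ 2 * dotp c w' ^ 2 ≤ (lam ^ k) ^ 2 * ((mu / lam) ^ k * ∑ j, c j ^ 2))
      exact this
    have htend : Filter.Tendsto (fun k : ℕ => (mu / lam) ^ k * ∑ j, c j ^ 2)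
        Filter.atTop (nhds 0) := by
      simpa using (tendsto_pow_atTop_nhds_zero_of_lt_one hr0 hr1).mul_const (∑ j, c j ^ 2)
    have hle : dotp c w' ^ 2 ≤ 0 := ge_of_tendsto' htend hkey
    nlinarith [hcw']
  -- final conclusion
  refine ⟨v, hvK.1, hvK.2, ?_⟩
  intro u hu
  apply Real.sqrt_le_sqrt
  have h1 : qf A u ≤ lam := by
    have h2 := lam_bound u
    rw [hu, mul_one] at h2
    exact h2
  have h3 : qf A u ≤ qf A v := le_trans h1 (by rw [hmu] at hlammu; exact hlammu)
  simpa [qf, dotp] using h3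
end

section
/- Gap preservation in the singular vector (Proposition 4): let Θ' ∈ ℝ^{n×p} have nondecreasing rows, each with nonzero Euclidean norm ‖Θ'_{k·}‖₂ > 0. Suppose v ∈ ℝ^p is a unit vector and λ > 0 are such that Θ'^T Θ' v = λ² v and all entries of the vector Θ' v ∈ ℝ^n have the same sign (all ≥ 0 or all ≤ 0). If δ > 0 and indices i < j satisfy |θ'_{k,i} − θ'_{k,j}| ≥ δ ‖Θ'_{k·}‖₂ for every row k, then |v_i − v_j| ≥ δ. -/
/-- Proposition 4: let `Θ'` have nondecreasing rows, each of positive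
Euclidean norm.  If `v` is a unit eigenvector of `Θ'ᵀΘ'` with eigenvalue `λ² > 0` such that
all entries of `Θ'v` have the same sign, and if `|θ'_{k,i} − θ'_{k,j}| ≥ δ‖Θ'_{k·}‖₂` for
every row `k` (for some fixed `i < j` and `δ > 0`), then `|v_i − v_j| ≥ δ`. -/
theorem singular_vector_gap_preservation {n p : ℕ}
    (Θ' : Fin n → Fin p → ℝ) (hrows : ∀ k, Monotone (Θ' k))
    (hrownorm : ∀ k, 0 < Real.sqrt (∑ j', (Θ' k j') ^ 2))
    (v : Fin p → ℝ) (hv : ∑ j', v j' ^ 2 = 1) (lam : ℝ) (hlam : 0 < lam)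
    (heig : ∀ j', ∑ j'', (∑ i', Θ' i' j' * Θ' i' j'') * v j'' = lam ^ 2 * v j')
    (hsign : (∀ i', 0 ≤ ∑ j', Θ' i' j' * v j') ∨ (∀ i', ∑ j', Θ' i' j' * v j' ≤ 0))
    (δ : ℝ) (hδ : 0 < δ) (i j : Fin p) (hij : i < j)
    (hgap : ∀ k, δ * Real.sqrt (∑ j', (Θ' k j') ^ 2) ≤ |Θ' k i - Θ' k j|) :
    δ ≤ |v i - v j| := by
  set u : Fin n → ℝ := fun k => ∑ j', Θ' k j' * v j' with hu
  set N : Fin n → ℝ := fun k => Real.sqrt (∑ j', (Θ' k j') ^ 2) with hN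
  -- Θ'ᵀ u = λ² v
  have hvj : ∀ j', ∑ k, Θ' k j' * u k = lam ^ 2 * v j' := by
    intro j'
    rw [← heig j']
    calc ∑ k, Θ' k j' * u k = ∑ k, ∑ j'', Θ' k j' * (Θ' k j'' * v j'') := by
          refine Finset.sum_congr rfl fun k _ => ?_
          rw [show u k = ∑ j'', Θ' k j'' * v j'' from rfl, Finset.mul_sum]
      _ = ∑ j'', ∑ k, Θ' k j' * (Θ' k j'' * v j'') := Finset.sum_comm
      _ = ∑ j'', (∑ i', Θ' i' j' * Θ' i' j'') * v j'' := by
          refine Finset.sum_congr rfl fun j'' _ => ?_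
          rw [Finset.sum_mul]
          exact Finset.sum_congr rfl fun k _ => by ring
  -- ∑ u² = λ²
  have hsum : ∑ k, u k ^ 2 = lam ^ 2 := by
    have h1 : ∑ k, u k ^ 2 = ∑ j', v j' * ∑ k, Θ' k j' * u k :=
      calc ∑ k, u k ^ 2 = ∑ k, ∑ j', v j' * (Θ' k j' * u k) := by
            refine Finset.sum_congr rfl fun k _ => ?_
            have huk : u k = ∑ j', Θ' k j' * v j' := rfl
            conv_lhs => rw [sq]
            nth_rewrite 1 [huk]
            rw [Finset.sum_mul]
            exact Finset.sum_congr rfl fun j' _ => by ring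
        _ = ∑ j', ∑ k, v j' * (Θ' k j' * u k) := Finset.sum_comm
        _ = ∑ j', v j' * ∑ k, Θ' k j' * u k := by
            exact Finset.sum_congr rfl fun j' _ => (Finset.mul_sum _ _ _).symm
    rw [h1]
    simp only [hvj]
    calc ∑ j', v j' * (lam ^ 2 * v j') = lam ^ 2 * ∑ j', v j' ^ 2 := by
          rw [Finset.mul_sum]; exact Finset.sum_congr rfl fun j' _ => by ring
      _ = lam ^ 2 := by rw [hv, mul_one]
  -- Cauchy-Schwarz : |u k| ≤ N k
  have hCS : ∀ k, |u k| ≤ N k := by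
    intro k
    have h := Finset.sum_mul_sq_le_sq_mul_sq Finset.univ (Θ' k) v
    rw [hv, mul_one] at h
    have h2 : u k ^ 2 ≤ ∑ j', Θ' k j' ^ 2 := h
    calc |u k| = Real.sqrt (u k ^ 2) := (Real.sqrt_sq_eq_abs _).symm
      _ ≤ Real.sqrt (∑ j', Θ' k j' ^ 2) := Real.sqrt_le_sqrt h2
      _ = N k := rfl
  -- the gap lower bound rewritten: δ N k ≤ Θ' k j - Θ' k i
  have hgap' : ∀ k, δ * N k ≤ Θ' k j - Θ' k i := by
    intro k
    have hmono : Θ' k i ≤ Θ' k j := hrows k (le_of_lt hij)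
    have := hgap k
    rwa [abs_sub_comm, abs_of_nonneg (by linarith)] at this
  have hlam2 : (0:ℝ) < lam ^ 2 := by positivity
  rcases hsign with hpos | hneg
  · -- u ≥ 0 case : v j - v i ≥ δ
    have key : ∀ k, δ * u k ^ 2 ≤ (Θ' k j - Θ' k i) * u k := by
      intro k
      have huk : 0 ≤ u k := hpos k
      have h1 : u k ≤ N k := (abs_of_nonneg huk) ▸ hCS k
      calc δ * u k ^ 2 = (δ * u k) * u k := by ring
        _ ≤ (δ * N k) * u k := by
            apply mul_le_mul_of_nonneg_right _ huk
            exact mul_le_mul_of_nonneg_left h1 (le_of_lt hδ)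
        _ ≤ (Θ' k j - Θ' k i) * u k :=
            mul_le_mul_of_nonneg_right (hgap' k) huk
    have hsumkey : δ * lam ^ 2 ≤ lam ^ 2 * (v j - v i) := by
      calc δ * lam ^ 2 = ∑ k, δ * u k ^ 2 := by
            rw [← Finset.mul_sum, hsum]
        _ ≤ ∑ k, (Θ' k j - Θ' k i) * u k := Finset.sum_le_sum fun k _ => key k
        _ = (∑ k, Θ' k j * u k) - ∑ k, Θ' k i * u k := by
            rw [← Finset.sum_sub_distrib]; congr 1; ext k; ring
        _ = lam ^ 2 * (v j - v i) := by rw [hvj, hvj]; ring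
    have : δ ≤ v j - v i := by
      have := (mul_le_mul_iff_of_pos_right hlam2).mp (by linarith [hsumkey] : δ * lam ^ 2 ≤ (v j - v i) * lam ^ 2)
      linarith
    calc δ ≤ v j - v i := this
      _ ≤ |v i - v j| := by rw [abs_sub_comm]; exact le_abs_self _
  · -- u ≤ 0 case : v i - v j ≥ δ
    have key : ∀ k, δ * u k ^ 2 ≤ (Θ' k j - Θ' k i) * (-u k) := by
      intro k
      have huk : 0 ≤ -u k := by linarith [hneg k]
      have h1 : -u k ≤ N k := by
        have := hCS k; rw [abs_of_nonpos (hneg k)] at this; exact this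
      calc δ * u k ^ 2 = (δ * (-u k)) * (-u k) := by ring
        _ ≤ (δ * N k) * (-u k) := by
            apply mul_le_mul_of_nonneg_right _ huk
            exact mul_le_mul_of_nonneg_left h1 (le_of_lt hδ)
        _ ≤ (Θ' k j - Θ' k i) * (-u k) :=
            mul_le_mul_of_nonneg_right (hgap' k) huk
    have hsumkey : δ * lam ^ 2 ≤ lam ^ 2 * (v i - v j) := by
      calc δ * lam ^ 2 = ∑ k, δ * u k ^ 2 := by
            rw [← Finset.mul_sum, hsum]
        _ ≤ ∑ k, (Θ' k j - Θ' k i) * (-u k) := Finset.sum_le_sum fun k _ => key k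
        _ = (∑ k, Θ' k i * u k) - ∑ k, Θ' k j * u k := by
            rw [← Finset.sum_sub_distrib]; congr 1; ext k; ring
        _ = lam ^ 2 * (v i - v j) := by rw [hvj, hvj]; ring
    have : δ ≤ v i - v j := by
      have := (mul_le_mul_iff_of_pos_right hlam2).mp (by linarith [hsumkey] : δ * lam ^ 2 ≤ (v i - v j) * lam ^ 2)
      linarith
    calc δ ≤ v i - v j := this
      _ ≤ |v i - v j| := le_abs_self _
end
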